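/- The two-point distribution with Pr(X = μ - σ·sqrt((1-β)/β)) = β and Pr(X = μ + σ·sqrt(β/(1-β))) = 1 - β has mean μ, variance σ², and attains equality in E[X⁺] = μ(1 - β) + σ·sqrt(β(1 - β)), provided μ - σ·sqrt((1-β)/β) ≤ 0 < μ + σ·sqrt(β/(1-β)). -/

import Mathlib

open MeasureTheory ProbabilityTheory Real

lemma two_point_ae {Ω : Type*} [MeasureSpace Ω] [IsProbabilityMeasure (ℙ : Measure Ω)]
    (X : Ω → ℝ) (L H : ℝ) (hLH : L ≠ H) (hmeas : Measurable X) (p q : ℝ)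
    (hp : 0 ≤ p) (hq : 0 ≤ q) (hpq : p + q = 1)
    (hA : ℙ {ω | X ω = L} = ENNReal.ofReal p)
    (hB : ℙ {ω | X ω = H} = ENNReal.ofReal q) :
    ∀ᵐ ω ∂(ℙ : Measure Ω), X ω = L ∨ X ω = H := by
  set A := {ω | X ω = L}
  set B := {ω | X ω = H}
  have hAm : MeasurableSet A := hmeas (measurableSet_singleton L)
  have hBm : MeasurableSet B := hmeas (measurableSet_singleton H)
  have hdisj : Disjoint A B := by
    rw [Set.disjoint_left]
    rintro ω (h1 : X ω = L) (h2 : X ω = H)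
    exact hLH (h1 ▸ h2)
  have hunion : ℙ (A ∪ B) = 1 := by
    rw [measure_union hdisj hBm, hA, hB, ← ENNReal.ofReal_add hp hq, hpq,
      ENNReal.ofReal_one]
  have hcompl : ℙ (A ∪ B)ᶜ = 0 := by
    rw [measure_compl (hAm.union hBm) (measure_ne_top _ _), hunion, measure_univ,
      tsub_self]
  rw [ae_iff]
  have hset : {ω | ¬(X ω = L ∨ X ω = H)} = (A ∪ B)ᶜ := by
    ext ω; simp [A, B, Set.mem_union]
  rw [hset]; exact hcompl

lemma integral_two_point {Ω : Type*} [MeasureSpace Ω] [IsProbabilityMeasure (ℙ : Measure Ω)]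
    (X : Ω → ℝ) (L H : ℝ) (hLH : L ≠ H) (hmeas : Measurable X) (p q : ℝ)
    (hp : 0 ≤ p) (hq : 0 ≤ q) (hpq : p + q = 1)
    (hA : ℙ {ω | X ω = L} = ENNReal.ofReal p)
    (hB : ℙ {ω | X ω = H} = ENNReal.ofReal q) (g : ℝ → ℝ) :
    ∫ ω, g (X ω) ∂(ℙ : Measure Ω) = p * g L + q * g H := by
  set A := {ω | X ω = L}
  set B := {ω | X ω = H}
  have hAm : MeasurableSet A := hmeas (measurableSet_singleton L)
  have hBm : MeasurableSet B := hmeas (measurableSet_singleton H)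
  have hae := two_point_ae X L H hLH hmeas p q hp hq hpq hA hB
  have heq : (fun ω => g (X ω)) =ᵐ[ℙ]
      fun ω => A.indicator (fun _ => g L) ω + B.indicator (fun _ => g H) ω := by
    filter_upwards [hae] with ω hω
    rcases hω with h | h
    · have hωA : ω ∈ A := h
      have hωB : ω ∉ B := by simp only [B, Set.mem_setOf_eq, h]; exact hLH
      simp [Set.indicator_of_mem hωA, Set.indicator_of_notMem hωB, h]
    · have hωB : ω ∈ B := h
      have hωA : ω ∉ A := by simp only [A, Set.mem_setOf_eq, h]; exact fun e => hLH e.symm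
      simp [Set.indicator_of_mem hωB, Set.indicator_of_notMem hωA, h]
  rw [integral_congr_ae heq, integral_add
    ((integrable_const (g L)).indicator hAm) ((integrable_const (g H)).indicator hBm),
    integral_indicator_const _ hAm, integral_indicator_const _ hBm, measureReal_def, measureReal_def, hA, hB,
    ENNReal.toReal_ofReal hp, ENNReal.toReal_ofReal hq]
  simp [mul_comm]

/-- The two-point distribution with `Pr(X = μ - σ√((1-β)/β)) = β` and
`Pr(X = μ + σ√(β/(1-β))) = 1 - β` has mean `μ`, variance `σ²`, and attains
equality `E[X⁺] = μ(1-β) + σ√(β(1-β))`, provided `L ≤ 0 < H`. -/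
theorem two_point_attains_bound {Ω : Type*} [MeasureSpace Ω]
    [IsProbabilityMeasure (ℙ : Measure Ω)]
    (X : Ω → ℝ) (μ σ β : ℝ) (hσ : 0 < σ) (hβ0 : 0 < β) (hβ1 : β < 1)
    (hmeas : Measurable X)
    (hL : ℙ {ω | X ω = μ - σ * Real.sqrt ((1 - β) / β)} = ENNReal.ofReal β)
    (hH : ℙ {ω | X ω = μ + σ * Real.sqrt (β / (1 - β))} = ENNReal.ofReal (1 - β))
    (hLneg : μ - σ * Real.sqrt ((1 - β) / β) ≤ 0)
    (hHpos : 0 < μ + σ * Real.sqrt (β / (1 - β))) :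
    (∫ ω, X ω ∂ℙ = μ)
      ∧ variance X ℙ = σ ^ 2
      ∧ ∫ ω, max (X ω) 0 ∂ℙ = μ * (1 - β) + σ * Real.sqrt (β * (1 - β)) := by
  set L := μ - σ * Real.sqrt ((1 - β) / β) with hLdef
  set H := μ + σ * Real.sqrt (β / (1 - β)) with hHdef
  have hb1 : (0:ℝ) < 1 - β := by linarith
  have hLH : L ≠ H := by linarith
  have hp : (0:ℝ) ≤ β := hβ0.le
  have hq : (0:ℝ) ≤ 1 - β := hb1.le
  have hpq : β + (1 - β) = 1 := by ring
  -- sqrt identities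
  have ha2 : Real.sqrt ((1 - β) / β) ^ 2 = (1 - β) / β :=
    Real.sq_sqrt (div_nonneg hq hp)
  have hb2 : Real.sqrt (β / (1 - β)) ^ 2 = β / (1 - β) :=
    Real.sq_sqrt (div_nonneg hp hq)
  have hkey1 : β * Real.sqrt ((1 - β) / β) = Real.sqrt (β * (1 - β)) := by
    have h1 : (1 - β) / β = β * (1 - β) / β ^ 2 := by field_simp
    rw [h1, Real.sqrt_div (by positivity), Real.sqrt_sq hp]
    field_simp
  have hkey2 : (1 - β) * Real.sqrt (β / (1 - β)) = Real.sqrt (β * (1 - β)) := by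
    have h1 : β / (1 - β) = β * (1 - β) / (1 - β) ^ 2 := by field_simp
    rw [h1, Real.sqrt_div (by positivity), Real.sqrt_sq hq]
    field_simp
  have ha2' : β * Real.sqrt ((1 - β) / β) ^ 2 = 1 - β := by
    rw [ha2]; field_simp
  have hb2' : (1 - β) * Real.sqrt (β / (1 - β)) ^ 2 = β := by
    rw [hb2]; field_simp
  have hint := fun g => integral_two_point X L H hLH hmeas β (1 - β) hp hq hpq hL hH g
  have hmean : ∫ ω, X ω ∂(ℙ : Measure Ω) = μ := by
    have := hint id
    simp only [id] at this
    rw [this, hLdef, hHdef]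
    linear_combination (-σ) * hkey1 + σ * hkey2
  refine ⟨hmean, ?_, ?_⟩
  · -- variance
    have hae := two_point_ae X L H hLH hmeas β (1 - β) hp hq hpq hL hH
    have hmem : MemLp X 2 (ℙ : Measure Ω) := by
      refine MemLp.of_bound hmeas.aestronglyMeasurable (max |L| |H|) ?_
      filter_upwards [hae] with ω hω
      rcases hω with h | h <;> rw [h, Real.norm_eq_abs]
      · exact le_max_left _ _
      · exact le_max_right _ _
    rw [variance_eq_sub hmem]
    have h2 : ∫ ω, (X ^ 2) ω ∂(ℙ : Measure Ω) = β * L ^ 2 + (1 - β) * H ^ 2 := by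
      have := hint (fun x => x ^ 2)
      simpa using this
    rw [h2, hmean]
    rw [hLdef, hHdef]
    linear_combination (-(2 * μ * σ)) * hkey1 + σ ^ 2 * ha2'
      + (2 * μ * σ) * hkey2 + σ ^ 2 * hb2'
  · -- E[X⁺]
    have := hint (fun x => max x 0)
    rw [this, max_eq_right hLneg, max_eq_left hHpos.le, hHdef]
    linear_combination σ * hkey2
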